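/- Let $X$ be the sum of $n \geq 2$ independent Bernoulli random variables each with success probability $1/2$. Then the probability that $0 < X < (3/4)n$ is strictly greater than $1/12$. -/

import Mathlib

open MeasureTheory ProbabilityTheory ENNReal

/-- The sum `X` of `n ≥ 2` independent Bernoulli(1/2) random variables
satisfies `Pr[0 < X < (3/4)n] > 1/12`. -/
theorem knockback_productive_round {Ω : Type*} [MeasurableSpace Ω]
    (μ : Measure Ω) [IsProbabilityMeasure μ]
    (n : ℕ) (hn : 2 ≤ n) (Y : Fin n → Ω → ℝ)
    (hmeas : ∀ i, Measurable (Y i))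
    (hindep : iIndepFun Y μ)
    (hbern : ∀ i, μ {ω | Y i ω = 1} = 1/2 ∧ μ {ω | Y i ω = 0} = 1/2) :
    (1 : ℝ≥0∞)/12 < μ {ω | 0 < ∑ i, Y i ω ∧ ∑ i, Y i ω < (3/4) * n} := by
  have hhalf : (1:ℝ≥0∞)/2 = ENNReal.ofReal (1/2) := by
    rw [ENNReal.ofReal_div_of_pos (by norm_num)]; norm_num
  have h112 : (1:ℝ≥0∞)/12 = ENNReal.ofReal (1/12) := by
    rw [ENNReal.ofReal_div_of_pos (by norm_num)]; norm_num
  have hA : ∀ i, MeasurableSet {ω | Y i ω = 1} := fun i => hmeas i (measurableSet_singleton 1)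
  have hB : ∀ i, MeasurableSet {ω | Y i ω = 0} := fun i => hmeas i (measurableSet_singleton 0)
  rcases eq_or_lt_of_le hn with heq | hn3
  · -- case n = 2
    subst heq
    have hind2 := hindep.indepFun (show (0:Fin 2) ≠ 1 by decide)
    rw [IndepFun_iff] at hind2
    have hAB : μ ({ω | Y 0 ω = 1} ∩ {ω | Y 1 ω = 0}) = 1/2 * (1/2) := by
      rw [hind2 {ω | Y 0 ω = 1} {ω | Y 1 ω = 0} ⟨{1}, measurableSet_singleton 1, rfl⟩
        ⟨{0}, measurableSet_singleton 0, rfl⟩, (hbern 0).1, (hbern 1).2]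
    have hsub : {ω | Y 0 ω = 1} ∩ {ω | Y 1 ω = 0} ⊆
        {ω | 0 < ∑ i, Y i ω ∧ ∑ i, Y i ω < (3/4) * (2:ℕ)} := by
      rintro ω ⟨h0, h1⟩
      simp only [Set.mem_setOf_eq] at h0 h1 ⊢
      rw [Fin.sum_univ_two, h0, h1]
      norm_num
    calc (1:ℝ≥0∞)/12 = ENNReal.ofReal (1/12) := h112
      _ < ENNReal.ofReal (1/4) := by
          rw [ENNReal.ofReal_lt_ofReal_iff (by norm_num)]; norm_num
      _ = 1/2 * (1/2) := by
          rw [show (1/4 : ℝ) = (1/2) * (1/2) by norm_num,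
            ENNReal.ofReal_mul (by norm_num), ← hhalf]
      _ = μ ({ω | Y 0 ω = 1} ∩ {ω | Y 1 ω = 0}) := hAB.symm
      _ ≤ _ := measure_mono hsub
  · -- case n ≥ 3
    set X : Ω → ℝ := fun ω => ∑ i, Y i ω with hXdef
    have hXmeas : Measurable X := Finset.measurable_sum _ (fun i _ => hmeas i)
    set c : ℝ := 3/4 * n with hc
    have hn0 : (0:ℝ) < n := by positivity
    have hcpos : 0 < c := by positivity
    set S : Set Ω := {ω | 0 < X ω ∧ X ω < c} with hS
    have hSmeas : MeasurableSet S := by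
      have : S = {ω | 0 < X ω} ∩ {ω | X ω < c} := rfl
      rw [this]
      exact (measurableSet_lt measurable_const hXmeas).inter
        (measurableSet_lt hXmeas measurable_const)
    -- a.e. each Y i ∈ {0,1}
    have hae : ∀ i, ∀ᵐ ω ∂μ, Y i ω = 0 ∨ Y i ω = 1 := by
      intro i
      have hdisj : Disjoint {ω | Y i ω = 0} {ω | Y i ω = 1} := by
        rw [Set.disjoint_left]; intro ω h0 h1
        simp only [Set.mem_setOf_eq] at h0 h1; rw [h0] at h1; norm_num at h1
      have hu : μ ({ω | Y i ω = 0} ∪ {ω | Y i ω = 1}) = 1 := by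
        rw [measure_union hdisj (hA i), (hbern i).2, (hbern i).1, ENNReal.add_halves]
      have hcompl : μ ({ω | Y i ω = 0} ∪ {ω | Y i ω = 1})ᶜ = 0 := by
        rw [measure_compl ((hB i).union (hA i)) (measure_ne_top _ _), measure_univ, hu,
          tsub_self]
      rw [ae_iff]
      have hset : {ω | ¬(Y i ω = 0 ∨ Y i ω = 1)} = ({ω | Y i ω = 0} ∪ {ω | Y i ω = 1})ᶜ := by
        ext ω; simp [not_or]
      rw [hset, hcompl]
    have hG : ∀ᵐ ω ∂μ, ∀ i, Y i ω = 0 ∨ Y i ω = 1 := ae_all_iff.mpr hae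
    -- integrability and expectation
    have hind : ∀ i, Y i =ᵐ[μ] fun ω => Set.indicator {ω | Y i ω = 1} (fun _ => (1:ℝ)) ω := by
      intro i
      filter_upwards [hae i] with ω h
      rcases h with h | h
      · rw [Set.indicator_of_notMem (by simp [Set.mem_setOf_eq, h]), h]
      · rw [Set.indicator_of_mem (by exact h), h]
    have hint : ∀ i, Integrable (Y i) μ := by
      intro i
      exact ((integrable_const (1:ℝ)).indicator (hA i)).congr (hind i).symm
    have hEi : ∀ i, ∫ ω, Y i ω ∂μ = 1/2 := by
      intro i
      rw [integral_congr_ae (hind i), integral_indicator_const (1:ℝ) (hA i), measureReal_def, (hbern i).1]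
      simp [ENNReal.toReal_div]
    have hXint : Integrable X μ := integrable_finset_sum _ (fun i _ => hint i)
    have hEX : ∫ ω, X ω ∂μ = n / 2 := by
      rw [hXdef]
      rw [integral_finset_sum _ (fun i _ => hint i)]
      simp only [hEi, Finset.sum_const, Finset.card_univ, Fintype.card_fin, nsmul_eq_mul]
      ring
    have hXnn : 0 ≤ᵐ[μ] X := by
      filter_upwards [hG] with ω h
      apply Finset.sum_nonneg
      intro i _
      rcases h i with h' | h' <;> rw [h'] <;> norm_num
    -- Markov
    have hmark := mul_meas_ge_le_integral_of_nonneg hXnn hXint c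
    rw [hEX, measureReal_def] at hmark
    have hE1 : (μ {ω | c ≤ X ω}).toReal ≤ 2/3 := by
      nlinarith [hmark, ENNReal.toReal_nonneg (a := μ {ω | c ≤ X ω})]
    -- P[X ≤ 0] ≤ (1/2)^n ≤ 1/8
    have hE0 : (μ {ω | X ω ≤ 0}).toReal ≤ 1/8 := by
      have hsub : {ω | X ω ≤ 0} ≤ᵐ[μ] ⋂ i, {ω | Y i ω = 0} := by
        filter_upwards [hG] with ω h hω
        have hnn : ∀ j ∈ Finset.univ, (0:ℝ) ≤ Y j ω := by
          intro j _; rcases h j with h' | h' <;> rw [h'] <;> norm_num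
        have hz : ∑ i, Y i ω = 0 := le_antisymm hω (Finset.sum_nonneg hnn)
        refine Set.mem_iInter.mpr fun i => ?_
        show Y i ω = 0
        exact (Finset.sum_eq_zero_iff_of_nonneg hnn).mp hz i (Finset.mem_univ i)
      have hprod : μ (⋂ i, {ω | Y i ω = 0}) = (1/2 : ℝ≥0∞)^n := by
        rw [hindep.meas_iInter (s := fun i => {ω | Y i ω = 0})
          (fun i => ⟨{0}, measurableSet_singleton 0, rfl⟩)]
        rw [Finset.prod_congr rfl (fun i _ => (hbern i).2), Finset.prod_const,
          Finset.card_univ, Fintype.card_fin]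
      have h1 : μ {ω | X ω ≤ 0} ≤ (1/2 : ℝ≥0∞)^n := by
        rw [← hprod]; exact measure_mono_ae hsub
      have h2 : (μ {ω | X ω ≤ 0}).toReal ≤ ((1/2 : ℝ≥0∞)^n).toReal :=
        ENNReal.toReal_mono (ENNReal.pow_ne_top (by norm_num)) h1
      refine h2.trans ?_
      rw [ENNReal.toReal_pow, ENNReal.toReal_div]
      simp only [ENNReal.toReal_one, ENNReal.toReal_ofNat]
      calc ((1:ℝ)/2)^n ≤ (1/2)^3 :=
            pow_le_pow_of_le_one (by norm_num) (by norm_num) (by omega)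
        _ ≤ 1/8 := by norm_num
    -- union bound
    have hcsub : Sᶜ ⊆ {ω | X ω ≤ 0} ∪ {ω | c ≤ X ω} := by
      intro ω hω
      simp only [Set.mem_compl_iff, hS, Set.mem_setOf_eq, not_and, not_lt] at hω
      rcases le_or_gt (X ω) 0 with h | h
      · exact Or.inl h
      · exact Or.inr (hω h)
    have hScompl : (μ Sᶜ).toReal ≤ 19/24 := by
      have h1 : μ Sᶜ ≤ μ {ω | X ω ≤ 0} + μ {ω | c ≤ X ω} :=
        (measure_mono hcsub).trans (measure_union_le _ _)
      have h2 : (μ Sᶜ).toReal ≤ (μ {ω | X ω ≤ 0}).toReal + (μ {ω | c ≤ X ω}).toReal := by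
        rw [← ENNReal.toReal_add (measure_ne_top _ _) (measure_ne_top _ _)]
        exact ENNReal.toReal_mono (by finiteness) h1
      linarith
    have hSr : 1 - (μ S).toReal ≤ 19/24 := by
      have h1 : (μ Sᶜ).toReal = 1 - (μ S).toReal := by
        rw [measure_compl hSmeas (measure_ne_top _ _), measure_univ,
          ENNReal.toReal_sub_of_le prob_le_one (by norm_num)]
        norm_num
      linarith [hScompl, h1.symm.le, h1.le]
    have hfin : (1:ℝ)/12 < (μ S).toReal := by linarith
    calc (1:ℝ≥0∞)/12 = ENNReal.ofReal (1/12) := h112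
      _ < ENNReal.ofReal ((μ S).toReal) := by
          rw [ENNReal.ofReal_lt_ofReal_iff (by linarith)]; exact hfin
      _ = μ S := ENNReal.ofReal_toReal (measure_ne_top _ _)
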